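/- arXiv:1408.0777 — 3 statements merged into one kernel-verified Lean document; each statement's English description precedes it below -/
import Mathlib

section
/- Let X be an integrable random variable on a probability space, let C be a random variable taking values in a finite set 𝒞, and let 𝓕 be a sub-σ-algebra. Suppose (i) C is measurable with respect to a σ-algebra 𝓖 with 𝓕 ⊆ 𝓖, and (ii) X is conditionally independent of 𝓕 given C, in the sense that E[X | σ(C) ⊔ 𝓕] = E[X | σ(C)] almost surely. Then E[X | 𝓕] = Σ_{c ∈ 𝒞} E[X | C = c] · P(C = c | 𝓕) almost surely, where the sum ranges over c with P(C = c) > 0. -/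
open MeasureTheory Set

private lemma stmt0_aux
    {Ω : Type*} (𝓕 : MeasurableSpace Ω) {m0 : MeasurableSpace Ω} (μ : Measure Ω)
    [IsProbabilityMeasure μ]
    {𝒞 : Type*} [Fintype 𝒞] [DecidableEq 𝒞] [MeasurableSpace 𝒞] [MeasurableSingletonClass 𝒞]
    (X : Ω → ℝ) (hXint : Integrable X μ)
    (C : Ω → 𝒞) (hC : Measurable C)
    (h𝓕 : 𝓕 ≤ m0) (hmC : MeasurableSpace.comap C inferInstance ≤ m0)
    (hdecouple :
      μ[X | (MeasurableSpace.comap C inferInstance) ⊔ 𝓕]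
        =ᵐ[μ] μ[X | MeasurableSpace.comap C inferInstance]) :
    μ[X | 𝓕] =ᵐ[μ]
      fun ω =>
        ∑ c ∈ Finset.univ.filter (fun c : 𝒞 => 0 < μ {ω' | C ω' = c}),
          ((μ {ω' | C ω' = c}).toReal⁻¹ * ∫ ω' in {ω' | C ω' = c}, X ω' ∂μ) *
            (μ[({ω' | C ω' = c}).indicator (fun _ => (1 : ℝ)) | 𝓕]) ω := by
  classical
  set A : 𝒞 → Set Ω := fun c => {ω' | C ω' = c} with hAdef
  have hA_eq : ∀ c, A c = C ⁻¹' {c} := by intro c; ext ω; simp [hAdef]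
  have hA_meas : ∀ c, MeasurableSet[m0] (A c) := fun c => by
    rw [hA_eq]; exact hC (measurableSet_singleton c)
  have hA_mC : ∀ c, MeasurableSet[MeasurableSpace.comap C inferInstance] (A c) := fun c =>
    ⟨{c}, measurableSet_singleton c, (hA_eq c).symm⟩
  have hA_disj : ∀ c c', c ≠ c' → Disjoint (A c) (A c') := by
    intro c c' hne
    refine Set.disjoint_left.2 fun ω h1 h2 => hne ?_
    simp only [hAdef, mem_setOf_eq] at h1 h2
    rw [← h1, h2]
  set mean : 𝒞 → ℝ := fun c => (μ (A c)).toReal⁻¹ * ∫ ω' in A c, X ω' ∂μ with hmean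
  set F : Finset 𝒞 := Finset.univ.filter (fun c : 𝒞 => 0 < μ (A c)) with hF
  set f : 𝒞 → Ω → ℝ := fun c => mean c • (A c).indicator (fun _ => (1 : ℝ)) with hfdef
  have hind_int : ∀ c, Integrable ((A c).indicator (fun _ => (1 : ℝ))) μ :=
    fun c => (integrable_const (1 : ℝ)).indicator (hA_meas c)
  have hf_int : ∀ c, Integrable (f c) μ := fun c => (hind_int c).smul (mean c)
  have hsum_apply : (∑ c ∈ F, f c) = fun a => ∑ c ∈ F, f c a := by
    ext a; simp [Finset.sum_apply]
  -- Step A: tower + decoupling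
  have h1 : μ[X|𝓕] =ᵐ[μ] μ[μ[X|MeasurableSpace.comap C inferInstance ⊔ 𝓕]|𝓕] :=
    (condExp_condExp_of_le le_sup_right (sup_le hmC h𝓕)).symm
  have h2 : μ[μ[X|MeasurableSpace.comap C inferInstance ⊔ 𝓕]|𝓕]
      =ᵐ[μ] μ[μ[X|MeasurableSpace.comap C inferInstance]|𝓕] := condExp_congr_ae hdecouple
  -- Step B: identify μ[X|mC]
  have h3 : (∑ c ∈ F, f c) =ᵐ[μ] μ[X|MeasurableSpace.comap C inferInstance] := by
    refine ae_eq_condExp_of_forall_setIntegral_eq hmC hXint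
      (fun s _ _ => by
        rw [hsum_apply]
        exact ((integrable_finset_sum F fun c _ => hf_int c)).integrableOn)
      (fun s hs _ => ?_) ?_
    · -- set integral equality
      obtain ⟨t, -, rfl⟩ := hs
      set tF : Finset 𝒞 := Finset.univ.filter (fun c => c ∈ t) with htF
      have hst : C ⁻¹' t = ⋃ c ∈ tF, A c := by
        ext ω; simp [htF, hA_eq]
      have hdisj : Set.Pairwise (↑tF) (Function.onFun Disjoint A) := fun c _ c' _ h => hA_disj c c' h
      have hIcX : ∀ c, ∫ ω' in A c, (∑ c' ∈ F, f c' ω') ∂μ = ∫ ω' in A c, X ω' ∂μ := by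
        intro c
        rw [integral_finset_sum F fun c' _ => (hf_int c').integrableOn]
        have hterm : ∀ c' ∈ F, ∫ ω' in A c, f c' ω' ∂μ
            = if c' = c then mean c * (μ (A c)).toReal else 0 := by
          intro c' _
          simp only [hfdef, Pi.smul_apply, smul_eq_mul]
          rw [integral_const_mul, setIntegral_indicator (hA_meas c'), setIntegral_const]
          by_cases hcc : c' = c
          · subst hcc; rw [Set.inter_self, if_pos rfl]; simp [mul_comm, Measure.real]
          · rw [(Set.disjoint_iff_inter_eq_empty.1 (hA_disj c c' (Ne.symm hcc))), if_neg hcc]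
            simp
        rw [Finset.sum_congr rfl hterm, Finset.sum_ite_eq' F c]
        by_cases hc : c ∈ F
        · rw [if_pos hc]
          have hpos : 0 < μ (A c) := (Finset.mem_filter.1 hc).2
          have hne : (μ (A c)).toReal ≠ 0 :=
            ENNReal.toReal_ne_zero.2 ⟨hpos.ne', (measure_lt_top μ _).ne⟩
          simp only [hmean]
          rw [mul_comm, ← mul_assoc, mul_inv_cancel₀ hne, one_mul]
        · rw [if_neg hc]
          have h0 : μ (A c) = 0 := by
            by_contra h
            exact hc (Finset.mem_filter.2 ⟨Finset.mem_univ c, pos_iff_ne_zero.2 h⟩)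
          rw [show μ.restrict (A c) = 0 from Measure.restrict_eq_zero.2 h0,
            integral_zero_measure]
      rw [hst, hsum_apply,
        integral_biUnion_finset tF (fun c _ => hA_meas c) hdisj
          (fun c _ => (integrable_finset_sum F fun c' _ => hf_int c').integrableOn),
        integral_biUnion_finset tF (fun c _ => hA_meas c) hdisj
          (fun c _ => hXint.integrableOn)]
      exact Finset.sum_congr rfl fun c _ => hIcX c
    · -- measurability
      refine StronglyMeasurable.aestronglyMeasurable ?_
      rw [hsum_apply]
      refine Finset.stronglyMeasurable_fun_sum F fun c _ => ?_
      exact ((@stronglyMeasurable_const Ω ℝ (MeasurableSpace.comap C inferInstance) _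
        (1 : ℝ)).indicator (hA_mC c)).const_smul (mean c)
  have h4 : μ[μ[X|MeasurableSpace.comap C inferInstance]|𝓕] =ᵐ[μ] μ[∑ c ∈ F, f c|𝓕] :=
    condExp_congr_ae h3.symm
  -- Step C: linearity
  have h5 : μ[∑ c ∈ F, f c|𝓕] =ᵐ[μ] ∑ c ∈ F, μ[f c|𝓕] :=
    condExp_finset_sum (fun c _ => hf_int c) 𝓕
  have h6 : ∀ c ∈ F, μ[f c|𝓕] =ᵐ[μ] mean c • μ[(A c).indicator (fun _ => (1 : ℝ))|𝓕] :=
    fun c _ => condExp_smul (mean c) _ 𝓕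
  have h7 : (∑ c ∈ F, μ[f c|𝓕]) =ᵐ[μ]
      fun ω => ∑ c ∈ F, mean c * (μ[(A c).indicator (fun _ => (1 : ℝ))|𝓕]) ω := by
    have hall := (ae_ball_iff F.countable_toSet).2 h6
    filter_upwards [hall] with ω hω
    rw [Finset.sum_apply]
    exact Finset.sum_congr rfl fun c hc => by rw [hω c hc]; simp
  exact h1.trans (h2.trans (h4.trans (h5.trans h7)))

/-- Multiresolution decomposition (abstract Theorem 1): if `X` is conditionally
independent of `𝓕` given the finite-valued random variable `C`, then
`E[X | 𝓕] = Σ_c E[X | C = c] · P(C = c | 𝓕)` a.s. -/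
theorem stmt0
    {Ω : Type*} {m0 : MeasurableSpace Ω} (μ : Measure Ω) [IsProbabilityMeasure μ]
    {𝒞 : Type*} [Fintype 𝒞] [DecidableEq 𝒞] [MeasurableSpace 𝒞] [MeasurableSingletonClass 𝒞]
    (X : Ω → ℝ) (hXint : Integrable X μ)
    (C : Ω → 𝒞) (hC : Measurable C)
    (𝓕 𝓖 : MeasurableSpace Ω) (h𝓕 : 𝓕 ≤ m0) (h𝓖 : 𝓖 ≤ m0)
    (h𝓕𝓖 : 𝓕 ≤ 𝓖) (hC𝓖 : MeasurableSpace.comap C inferInstance ≤ 𝓖)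
    (hdecouple :
      μ[X | (MeasurableSpace.comap C inferInstance) ⊔ 𝓕]
        =ᵐ[μ] μ[X | MeasurableSpace.comap C inferInstance]) :
    μ[X | 𝓕] =ᵐ[μ]
      fun ω =>
        ∑ c ∈ Finset.univ.filter (fun c : 𝒞 => 0 < μ {ω' | C ω' = c}),
          ((μ {ω' | C ω' = c}).toReal⁻¹ * ∫ ω' in {ω' | C ω' = c}, X ω' ∂μ) *
            (μ[({ω' | C ω' = c}).indicator (fun _ => (1 : ℝ)) | 𝓕]) ω :=
  stmt0_aux 𝓕 μ X hXint C hC h𝓕 (hC𝓖.trans h𝓖) hdecouple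
end

section
/- Let X, C, 𝓕 be as follows: X integrable, C finite-valued, 𝓕 a sub-σ-algebra, and suppose E[X | σ(C) ⊔ 𝓕] = E[X | σ(C)] a.s. Then for any bounded 𝓕-measurable random variable W, E[X · W] = Σ_{c ∈ 𝒞} E[X | C = c] · E[1_{C=c} · W], with the sum over c with P(C = c) > 0. -/
open MeasureTheory Set

/-- The σ-algebra generated by `C`. -/
def sigC {Ω 𝒞 : Type*} [MeasurableSpace 𝒞] (C : Ω → 𝒞) : MeasurableSpace Ω :=
  MeasurableSpace.comap C inferInstance

/-- Integrated (weak) form of the multiresolution decomposition: under the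
decoupling assumption `E[X | σ(C) ⊔ 𝓕] = E[X | σ(C)]` a.s., for every bounded
`𝓕`-measurable `W`, `E[X·W] = Σ_c E[X | C = c] · E[1_{C=c}·W]`. -/
theorem stmt11
    {Ω : Type*} {m0 : MeasurableSpace Ω} (μ : Measure Ω) [IsProbabilityMeasure μ]
    {𝒞 : Type*} [Fintype 𝒞] [DecidableEq 𝒞] [MeasurableSpace 𝒞] [MeasurableSingletonClass 𝒞]
    (X : Ω → ℝ) (hXint : Integrable X μ)
    (C : Ω → 𝒞) (hC : Measurable C)
    (𝓕 : MeasurableSpace Ω) (h𝓕 : 𝓕 ≤ m0)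
    (hdecouple :
      μ[X | (MeasurableSpace.comap C inferInstance) ⊔ 𝓕]
        =ᵐ[μ] μ[X | MeasurableSpace.comap C inferInstance])
    (W : Ω → ℝ) (hWmeas : Measurable[𝓕] W) (hWbdd : ∃ M, ∀ ω, |W ω| ≤ M) :
    ∫ ω, X ω * W ω ∂μ =
      ∑ c ∈ Finset.univ.filter (fun c : 𝒞 => 0 < μ {ω' | C ω' = c}),
        ((μ {ω' | C ω' = c}).toReal⁻¹ * ∫ ω' in {ω' | C ω' = c}, X ω' ∂μ) *
          ∫ ω, ({ω' | C ω' = c}).indicator (fun _ => (1 : ℝ)) ω * W ω ∂μ := by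
  letI : MeasurableSpace Ω := m0
  have hmC : sigC C ≤ m0 := hC.comap_le
  have hm : sigC C ⊔ 𝓕 ≤ m0 := sup_le hmC h𝓕
  obtain ⟨M, hM⟩ := hWbdd
  -- measurability of W
  have hWm : Measurable[sigC C ⊔ 𝓕] W := hWmeas.mono le_sup_right le_rfl
  have hWm0 : Measurable[m0] W := hWm.mono hm le_rfl
  have hWsm : StronglyMeasurable[sigC C ⊔ 𝓕] W := hWm.stronglyMeasurable
  -- integrability
  have hWX : Integrable (fun ω => W ω * X ω) μ :=
    hXint.bdd_mul hWm0.aestronglyMeasurable (Filter.Eventually.of_forall fun x => by simpa using hM x)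
  have hWXmul : Integrable (W * X) μ := hWX
  -- atoms measurable
  have hAtommC : ∀ c : 𝒞, MeasurableSet[sigC C] {ω' | C ω' = c} := fun c =>
    ⟨{c}, measurableSet_singleton c, rfl⟩
  have hAtom : ∀ c : 𝒞, MeasurableSet[m0] {ω' | C ω' = c} := fun c => hmC _ (hAtommC c)
  -- step 1: pull-out
  have hdec2 : μ[X | sigC C ⊔ 𝓕] =ᵐ[μ] μ[X | sigC C] := hdecouple
  set f := μ[X | sigC C] with hfdef
  have hfm : Measurable[sigC C] f := (stronglyMeasurable_condExp).measurable
  have step1 : ∫ ω, X ω * W ω ∂μ = ∫ ω, W ω * f ω ∂μ := by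
    have h1 : μ[W * X | sigC C ⊔ 𝓕] =ᵐ[μ] W * μ[X | sigC C ⊔ 𝓕] :=
      condExp_mul_of_stronglyMeasurable_left hWsm hWXmul hXint
    have h2 : μ[W * X | sigC C ⊔ 𝓕] =ᵐ[μ] W * f := by
      refine h1.trans ?_
      filter_upwards [hdec2] with ω hω
      simp [hω]
    calc ∫ ω, X ω * W ω ∂μ = ∫ ω, (W * X) ω ∂μ := by
          simp [mul_comm]
      _ = ∫ ω, (μ[W * X | sigC C ⊔ 𝓕]) ω ∂μ := (integral_condExp hm).symm
      _ = ∫ ω, (W * f) ω ∂μ := integral_congr_ae h2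
      _ = ∫ ω, W ω * f ω ∂μ := rfl
  -- f is constant on atoms
  have hconst : ∀ ω ω', C ω = C ω' → f ω = f ω' := by
    intro ω ω' hωω'
    by_contra hne
    have hmeas : MeasurableSet[sigC C] (f ⁻¹' {f ω}) := hfm (measurableSet_singleton _)
    obtain ⟨S, -, hS⟩ := hmeas
    have hω : ω ∈ f ⁻¹' {f ω} := rfl
    rw [← hS] at hω
    have : ω' ∈ C ⁻¹' S := by simpa [← hωω'] using hω
    rw [hS] at this
    exact hne this.symm
  -- integrability of W * f
  have hfint : Integrable f μ := integrable_condExp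
  have hWfint : Integrable (fun ω => W ω * f ω) μ :=
    hfint.bdd_mul hWm0.aestronglyMeasurable (Filter.Eventually.of_forall fun x => by simpa using hM x)
  rw [step1]
  -- decompose over atoms
  have hdecomp : ∫ ω, W ω * f ω ∂μ =
      ∑ c : 𝒞, ∫ ω in {ω' | C ω' = c}, W ω * f ω ∂μ := by
    have hpt : ∀ ω, W ω * f ω =
        ∑ c : 𝒞, ({ω' | C ω' = c}).indicator (fun ω => W ω * f ω) ω := by
      intro ω
      rw [Finset.sum_eq_single (C ω)]
      · simp [Set.indicator_of_mem, Set.mem_setOf_eq]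
      · intro b _ hb
        exact Set.indicator_of_notMem (by simp [Ne.symm hb]) _
      · simp
    calc ∫ ω, W ω * f ω ∂μ
        = ∫ ω, ∑ c : 𝒞, ({ω' | C ω' = c}).indicator (fun ω => W ω * f ω) ω ∂μ := by
          exact integral_congr_ae (Filter.Eventually.of_forall hpt)
      _ = ∑ c : 𝒞, ∫ ω, ({ω' | C ω' = c}).indicator (fun ω => W ω * f ω) ω ∂μ := by
          exact integral_finset_sum _ (fun c _ => hWfint.indicator (hAtom c))
      _ = ∑ c : 𝒞, ∫ ω in {ω' | C ω' = c}, W ω * f ω ∂μ := by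
          refine Finset.sum_congr rfl fun c _ => ?_
          rw [integral_indicator (hAtom c)]
  rw [hdecomp]
  -- compare termwise, dropping null atoms
  rw [← Finset.sum_filter_add_sum_filter_not Finset.univ
      (fun c : 𝒞 => 0 < μ {ω' | C ω' = c})]
  have hnull : ∑ c ∈ Finset.univ.filter (fun c : 𝒞 => ¬ 0 < μ {ω' | C ω' = c}),
      ∫ ω in {ω' | C ω' = c}, W ω * f ω ∂μ = 0 := by
    refine Finset.sum_eq_zero fun c hc => ?_
    simp only [Finset.mem_filter, not_lt, le_zero_iff] at hc
    rw [Measure.restrict_eq_zero.mpr hc.2, integral_zero_measure]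
  rw [hnull, add_zero]
  refine Finset.sum_congr rfl fun c hc => ?_
  simp only [Finset.mem_filter] at hc
  have hpos := hc.2
  -- pick a point in the atom
  have hne : ({ω' | C ω' = c} : Set Ω).Nonempty := by
    by_contra h
    rw [Set.not_nonempty_iff_eq_empty] at h
    rw [h] at hpos; simp at hpos
  obtain ⟨ω₀, hω₀⟩ := hne
  have hconst' : ∀ ω ∈ {ω' | C ω' = c}, W ω * f ω = W ω * f ω₀ := by
    intro ω hω
    rw [hconst ω ω₀ (hω.trans hω₀.symm)]
  have hLHS : ∫ ω in {ω' | C ω' = c}, W ω * f ω ∂μ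
      = f ω₀ * ∫ ω in {ω' | C ω' = c}, W ω ∂μ := by
    rw [setIntegral_congr_fun (hAtom c) hconst', ← integral_const_mul]
    congr 1; ext ω; ring
  rw [hLHS]
  -- value of f on the atom
  have hμfin : μ {ω' | C ω' = c} ≠ ⊤ := measure_ne_top μ _
  have htoReal : (μ {ω' | C ω' = c}).toReal ≠ 0 := by
    simp [ENNReal.toReal_eq_zero_iff, hpos.ne', hμfin]
  have hsetint : ∫ ω in {ω' | C ω' = c}, f ω ∂μ = ∫ ω in {ω' | C ω' = c}, X ω ∂μ :=
    setIntegral_condExp hmC hXint (hAtommC c)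
  have hfval : f ω₀ = (μ {ω' | C ω' = c}).toReal⁻¹ * ∫ ω' in {ω' | C ω' = c}, X ω' ∂μ := by
    have h1 : ∫ ω in {ω' | C ω' = c}, f ω ∂μ = f ω₀ * (μ {ω' | C ω' = c}).toReal := by
      rw [setIntegral_congr_fun (hAtom c)
        (fun ω hω => hconst ω ω₀ (hω.trans hω₀.symm) : ∀ ω ∈ {ω' | C ω' = c}, f ω = f ω₀)]
      rw [setIntegral_const, smul_eq_mul, mul_comm, Measure.real]
    rw [h1] at hsetint
    field_simp [htoReal] at hsetint ⊢
    linarith [hsetint]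
  have hind : ∫ ω, ({ω' | C ω' = c}).indicator (fun _ => (1 : ℝ)) ω * W ω ∂μ
      = ∫ ω in {ω' | C ω' = c}, W ω ∂μ := by
    rw [← integral_indicator (hAtom c)]
    congr 1; ext ω
    by_cases hω : ω ∈ {ω' | C ω' = c} <;> simp [hω]
  rw [hind, ← hfval]
end

section
/- Suppose ν_t = E[X | 𝓕_t] where X = h(C_T) for a bounded h : 𝒞 → ℝ and T is an a.s. finite 𝓕-stopping time, and assume decoupling: E[X | 𝓕_t ⊔ σ(C_{δ_t})] = E[X | σ(C_{δ_t})] a.s. for a random variable C_{δ_t} with values in finite 𝒞. Then ν_t = Σ_{c ∈ 𝒞} E[X | C_{δ_t} = c] · P(C_{δ_t} = c | 𝓕_t) a.s. -/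
open MeasureTheory Set

/-- Theorem 1 (equation (3)) of the paper: under decoupling,
`ν_t = E[X | 𝓕_t] = Σ_c E[X | C_{δ_t} = c] · P(C_{δ_t} = c | 𝓕_t)` a.s. -/
theorem stmt14
    {Ω : Type*} {m0 : MeasurableSpace Ω} (μ : Measure Ω) [IsProbabilityMeasure μ]
    {𝒞 : Type*} [Fintype 𝒞] [DecidableEq 𝒞] [MeasurableSpace 𝒞] [MeasurableSingletonClass 𝒞]
    (𝓕 : Filtration NNReal m0)
    -- the coarsened process and the a.s. finite stopping time `T`
    (Cproc : NNReal → Ω → 𝒞) (hCproc : ∀ s, Measurable (Cproc s))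
    (T : Ω → NNReal) (hT : IsStoppingTime 𝓕 (fun ω => (T ω : WithTop NNReal)))
    (h : 𝒞 → ℝ)
    (X : Ω → ℝ) (hX : X = fun ω => h (Cproc (T ω) ω))
    (hXmeas : Measurable X) (hXbdd : ∃ M, ∀ ω, |X ω| ≤ M)
    (t : NNReal)
    -- the state at the macrotransition exit time `δ_t`
    (Cδ : Ω → 𝒞) (hCδ : Measurable Cδ)
    (hdecouple :
      μ[X | 𝓕 t ⊔ MeasurableSpace.comap Cδ inferInstance]
        =ᵐ[μ] μ[X | MeasurableSpace.comap Cδ inferInstance]) :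
    μ[X | 𝓕 t] =ᵐ[μ]
      fun ω =>
        ∑ c ∈ Finset.univ.filter (fun c : 𝒞 => 0 < μ {ω' | Cδ ω' = c}),
          ((μ {ω' | Cδ ω' = c}).toReal⁻¹ * ∫ ω' in {ω' | Cδ ω' = c}, X ω' ∂μ) *
            (μ[({ω' | Cδ ω' = c}).indicator (fun _ => (1 : ℝ)) | 𝓕 t]) ω := by
  classical
  set A : 𝒞 → Set Ω := fun c => {ω' | Cδ ω' = c} with hAdef
  have hApre : ∀ c, A c = Cδ ⁻¹' {c} := fun c => rfl
  have hA : ∀ c, MeasurableSet (A c) := fun c => hCδ (measurableSet_singleton c)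
  set avg : 𝒞 → ℝ := fun c => (μ (A c)).toReal⁻¹ * ∫ ω' in A c, X ω' ∂μ with havg
  set g : Ω → ℝ := fun ω => avg (Cδ ω) with hg
  -- integrability of X
  obtain ⟨M, hM⟩ := hXbdd
  have hXint : Integrable X μ := by
    refine (integrable_const M).mono' hXmeas.aestronglyMeasurable ?_
    exact Filter.Eventually.of_forall fun ω => by simpa using hM ω
  -- g as a finite sum of scaled indicators
  set G : 𝒞 → Ω → ℝ := fun c => avg c • (A c).indicator (fun _ => (1 : ℝ)) with hG
  have hGint : ∀ c, Integrable (G c) μ := by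
    intro c
    rw [hG]
    exact ((integrable_const (1 : ℝ)).indicator (hA c)).smul (avg c)
  have hgsum : g = ∑ c : 𝒞, G c := by
    funext ω
    simp only [hg, hG, Finset.sum_apply, Pi.smul_apply, Set.indicator_apply, hAdef,
      Set.mem_setOf_eq, smul_eq_mul, mul_ite, mul_one, mul_zero]
    rw [Finset.sum_ite_eq Finset.univ (Cδ ω) avg]
    simp
  have hgint : Integrable g μ := by
    rw [hgsum]
    exact (integrable_finset_sum Finset.univ fun c _ => hGint c).congr
      (Filter.Eventually.of_forall fun a => by simp)
  -- g is measurable w.r.t. the comap σ-algebra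
  have hgmC : Measurable[MeasurableSpace.comap Cδ inferInstance] g :=
    (measurable_of_countable avg).comp (Measurable.of_comap_le le_rfl)
  -- key: set integrals of g and X agree on each atom
  have hkey : ∀ c, ∫ ω' in A c, g ω' ∂μ = ∫ ω' in A c, X ω' ∂μ := by
    intro c
    have hgc : Set.EqOn g (fun _ => avg c) (A c) := by
      intro ω hω
      simp only [hg]
      rw [show Cδ ω = c from hω]
    rw [setIntegral_congr_fun (hA c) hgc, setIntegral_const]
    rcases eq_or_ne (μ (A c)) 0 with h0 | h0
    · rw [Measure.restrict_eq_zero.mpr h0]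
      simp [h0, Measure.real]
    · have hfin : μ (A c) ≠ ⊤ := measure_ne_top μ _
      have htR : (μ (A c)).toReal ≠ 0 := ENNReal.toReal_ne_zero.mpr ⟨h0, hfin⟩
      simp only [havg, smul_eq_mul]
      field_simp
      rfl
  -- g is the conditional expectation of X given the comap σ-algebra
  have hmC : MeasurableSpace.comap Cδ inferInstance ≤ m0 := hCδ.comap_le
  haveI : SigmaFinite (μ.trim hmC) := inferInstance
  have hgX : g =ᵐ[μ] μ[X|MeasurableSpace.comap Cδ inferInstance] := by
    refine ae_eq_condExp_of_forall_setIntegral_eq hmC hXint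
      (fun s _ _ => hgint.integrableOn) ?_
      ((hgmC.stronglyMeasurable).aestronglyMeasurable)
    rintro s ⟨S, -, rfl⟩ -
    have hum : Cδ ⁻¹' S = ⋃ c ∈ S.toFinset, A c := by
      ext ω
      simp [hApre, Set.mem_preimage]
    have hdisj : Set.Pairwise (↑S.toFinset) (Function.onFun Disjoint A) := by
      intro c _ d _ hcd
      refine Set.disjoint_left.mpr fun ω hc hd => hcd ?_
      simp only [hAdef, Set.mem_setOf_eq] at hc hd
      rw [← hc, hd]
    rw [hum,
      integral_biUnion_finset S.toFinset (fun c _ => hA c) hdisj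
        (fun c _ => hgint.integrableOn),
      integral_biUnion_finset S.toFinset (fun c _ => hA c) hdisj
        (fun c _ => hXint.integrableOn)]
    exact Finset.sum_congr rfl fun c _ => hkey c
  -- conditional expectation of each scaled indicator
  have hsmul : ∀ᵐ ω ∂μ, ∀ c : 𝒞,
      (μ[G c|𝓕 t]) ω = avg c * (μ[(A c).indicator (fun _ => (1 : ℝ))|𝓕 t]) ω := by
    rw [ae_all_iff]
    intro c
    have : μ[G c|𝓕 t] =ᵐ[μ] avg c • μ[(A c).indicator (fun _ => (1 : ℝ))|𝓕 t] := by
      rw [hG]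
      exact condExp_smul (avg c) ((A c).indicator (fun _ => (1 : ℝ))) _
    filter_upwards [this] with ω hω
    simpa using hω
  -- chain everything
  have h1 : μ[X|𝓕 t] =ᵐ[μ]
      μ[μ[X|𝓕 t ⊔ MeasurableSpace.comap Cδ inferInstance]|𝓕 t] :=
    (condExp_condExp_of_le le_sup_left (sup_le (𝓕.le t) hmC)).symm
  have h2 : μ[μ[X|𝓕 t ⊔ MeasurableSpace.comap Cδ inferInstance]|𝓕 t] =ᵐ[μ] μ[g|𝓕 t] :=
    condExp_congr_ae (hdecouple.trans hgX.symm)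
  have h3 : μ[g|𝓕 t] =ᵐ[μ] ∑ c : 𝒞, μ[G c|𝓕 t] := by
    rw [hgsum]
    exact condExp_finsetSum (fun c _ => hGint c) _
  refine ((h1.trans h2).trans h3).trans ?_
  filter_upwards [hsmul] with ω hω
  simp only [Finset.sum_apply]
  rw [← Finset.sum_filter_of_ne (p := fun c : 𝒞 => 0 < μ (A c))
    (fun c _ hne => ?_)]
  · exact Finset.sum_congr rfl fun c _ => hω c
  · by_contra hpos
    have h0 : μ (A c) = 0 := by
      simpa [pos_iff_ne_zero] using hpos
    have hz : avg c = 0 := by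
      rw [havg]
      simp only
      rw [Measure.restrict_eq_zero.mpr h0]
      simp [h0]
    rw [hω c, hz, zero_mul] at hne
    exact hne rfl
end
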